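/- Let g₁, g₂ ∈ ℝ^m with ‖g₁‖ = ‖g₂‖ ≠ 0 and angle α ∈ (0, π) between them, and G the matrix with columns g₁, g₂. Then the condition number of G equals tan(α/2) if π/2 ≤ α < π and cot(α/2) if 0 < α < π/2; in particular κ(G) = 1 iff g₁ ⊥ g₂. -/

import Mathlib

open Matrix

lemma iSup_fin_two (f : Fin 2 → ℝ) : (⨆ i, f i) = max (f 0) (f 1) := by
  apply le_antisymm
  · refine ciSup_le fun i => ?_
    fin_cases i
    · exact le_max_left _ _
    · exact le_max_right _ _
  · exact max_le (le_ciSup (Set.finite_range f).bddAbove 0)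
      (le_ciSup (Set.finite_range f).bddAbove 1)

lemma iInf_fin_two (f : Fin 2 → ℝ) : (⨅ i, f i) = min (f 0) (f 1) := by
  apply le_antisymm
  · exact le_min (ciInf_le (Set.finite_range f).bddBelow 0)
      (ciInf_le (Set.finite_range f).bddBelow 1)
  · refine le_ciInf fun i => ?_
    fin_cases i
    · exact min_le_left _ _
    · exact min_le_right _ _

/-- For a matrix `G` with two equal-norm nonzero columns at angle `α ∈ (0, π)`,
the condition number equals `tan (α/2)` if `π/2 ≤ α` and `cot (α/2)` if `α < π/2`;
it equals 1 iff the columns are orthogonal. -/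
theorem stmt_2 (m : ℕ) (g₁ g₂ : Fin m → ℝ)
    (h1 : g₁ ≠ 0)
    (hnorm : Real.sqrt (∑ i, g₁ i ^ 2) = Real.sqrt (∑ i, g₂ i ^ 2))
    (α : ℝ) (hα0 : 0 < α) (hαπ : α < Real.pi)
    (hcos : Real.cos α
      = (∑ i, g₁ i * g₂ i) / (Real.sqrt (∑ i, g₁ i ^ 2) * Real.sqrt (∑ i, g₂ i ^ 2)))
    (G : Matrix (Fin m) (Fin 2) ℝ)
    (hG : ∀ i, G i 0 = g₁ i ∧ G i 1 = g₂ i)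
    (hM : (Gᵀ * G).IsHermitian) :
    (Real.pi / 2 ≤ α →
      Real.sqrt (⨆ i, hM.eigenvalues i) / Real.sqrt (⨅ i, hM.eigenvalues i)
        = Real.tan (α / 2)) ∧
    (α < Real.pi / 2 →
      Real.sqrt (⨆ i, hM.eigenvalues i) / Real.sqrt (⨅ i, hM.eigenvalues i)
        = Real.cot (α / 2)) ∧
    (Real.sqrt (⨆ i, hM.eigenvalues i) / Real.sqrt (⨅ i, hM.eigenvalues i) = 1
      ↔ ∑ i, g₁ i * g₂ i = 0) := by
  set s : ℝ := ∑ i, g₁ i ^ 2 with hs_def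
  set c : ℝ := Real.cos α with hc_def
  -- positivity of s
  have hs : 0 < s := by
    obtain ⟨i, hi⟩ := Function.ne_iff.mp h1
    exact Finset.sum_pos' (fun j _ => sq_nonneg _)
      ⟨i, Finset.mem_univ i, lt_of_le_of_ne (sq_nonneg _) (Ne.symm (pow_ne_zero 2 hi))⟩
  have hg2nn : (0:ℝ) ≤ ∑ i, g₂ i ^ 2 := Finset.sum_nonneg fun j _ => sq_nonneg _
  have hs2 : ∑ i, g₂ i ^ 2 = s := by
    have := (Real.sqrt_inj hs.le hg2nn).mp hnorm
    linarith
  -- inner product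
  have hip : ∑ i, g₁ i * g₂ i = s * c := by
    have hss : Real.sqrt s * Real.sqrt (∑ i, g₂ i ^ 2) = s := by
      rw [← hnorm, Real.mul_self_sqrt hs.le]
    rw [hss] at hcos
    rw [eq_div_iff hs.ne'] at hcos
    linarith [hcos]
  -- entries of GᵀG
  have hGG : ∀ j k : Fin 2, (Gᵀ * G) j k = ∑ i, G i j * G i k := by
    intro j k; simp [Matrix.mul_apply, Matrix.transpose_apply]
  have h00 : (Gᵀ * G) 0 0 = s := by
    rw [hGG]; apply Finset.sum_congr rfl; intro i _; rw [(hG i).1, sq]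
  have h11 : (Gᵀ * G) 1 1 = s := by
    rw [hGG, ← hs2]; apply Finset.sum_congr rfl; intro i _; rw [(hG i).2, sq]
  have h01 : (Gᵀ * G) 0 1 = s * c := by
    rw [hGG, ← hip]; apply Finset.sum_congr rfl; intro i _; rw [(hG i).1, (hG i).2]
  have h10 : (Gᵀ * G) 1 0 = s * c := by
    rw [hGG, ← hip]; apply Finset.sum_congr rfl; intro i _
    rw [(hG i).1, (hG i).2, mul_comm]
  set e : Fin 2 → ℝ := hM.eigenvalues with he_def
  -- trace
  have htr : e 0 + e 1 = 2 * s := by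
    have t2 : (Gᵀ * G).trace = ∑ i, e i := by
      conv_lhs => rw [hM.spectral_theorem]
      rw [Unitary.conjStarAlgAut_apply, Matrix.trace_mul_cycle]
      rw [show (star (hM.eigenvectorUnitary : Matrix (Fin 2) (Fin 2) ℝ)) *
          (hM.eigenvectorUnitary : Matrix (Fin 2) (Fin 2) ℝ) = 1 from
        Matrix.mem_unitaryGroup_iff'.mp hM.eigenvectorUnitary.2]
      simp [Matrix.trace_diagonal, he_def]
    have t1 : (Gᵀ * G).trace = 2 * s := by
      rw [Matrix.trace]
      rw [Fin.sum_univ_two]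
      simp only [Matrix.diag_apply]
      rw [h00, h11]; ring
    rw [t1, Fin.sum_univ_two] at t2
    linarith
  -- det
  have hdet : e 0 * e 1 = s ^ 2 * (1 - c ^ 2) := by
    have d2 : (Gᵀ * G).det = ∏ i, e i := by
      have := hM.det_eq_prod_eigenvalues
      simpa using this
    have d1 : (Gᵀ * G).det = s ^ 2 * (1 - c ^ 2) := by
      rw [Matrix.det_fin_two, h00, h11, h01, h10]; ring
    rw [d1, Fin.prod_univ_two] at d2
    linarith
  -- 1 ± c > 0
  have hhalf1 : 0 < α / 2 := by linarith
  have hhalf2 : α / 2 < Real.pi / 2 := by linarith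
  have hsinp : 0 < Real.sin (α / 2) :=
    Real.sin_pos_of_pos_of_lt_pi hhalf1 (by linarith [Real.pi_pos])
  have hcosp : 0 < Real.cos (α / 2) :=
    Real.cos_pos_of_mem_Ioo ⟨by linarith [Real.pi_pos], hhalf2⟩
  have hcosh : Real.cos (α / 2) = Real.sqrt ((1 + c) / 2) :=
    Real.cos_half (by linarith [Real.pi_pos]) hαπ.le
  have hsinh : Real.sin (α / 2) = Real.sqrt ((1 - c) / 2) :=
    Real.sin_half_eq_sqrt hα0.le (by linarith [Real.pi_pos])
  have h1pc : 0 < 1 + c := by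
    by_contra h
    push_neg at h
    have : Real.sqrt ((1 + c) / 2) = 0 := by
      rw [Real.sqrt_eq_zero']; linarith
    rw [← hcosh] at this; linarith
  have h1mc : 0 < 1 - c := by
    by_contra h
    push_neg at h
    have : Real.sqrt ((1 - c) / 2) = 0 := by
      rw [Real.sqrt_eq_zero']; linarith
    rw [← hsinh] at this; linarith
  have habs1 : 0 < 1 + |c| ∧ 0 < 1 - |c| := by
    rcases abs_cases c with ⟨h, _⟩ | ⟨h, _⟩ <;> rw [h] <;> constructor <;> linarith
  -- eigenvalues
  have hroots : (e 0 = s * (1 + |c|) ∧ e 1 = s * (1 - |c|)) ∨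
      (e 0 = s * (1 - |c|) ∧ e 1 = s * (1 + |c|)) := by
    have hca : |c| ^ 2 = c ^ 2 := sq_abs c
    have hz : (e 0 - s * (1 + |c|)) * (e 0 - s * (1 - |c|)) = 0 := by
      linear_combination (e 0) * htr - hdet - s ^ 2 * hca
    rcases mul_eq_zero.mp hz with h | h
    · left; constructor
      · linarith
      · linear_combination htr - h
    · right; constructor
      · linarith
      · linear_combination htr - h
  have hle : s * (1 - |c|) ≤ s * (1 + |c|) := by
    nlinarith [abs_nonneg c, hs.le]
  have hmax : (⨆ i, e i) = s * (1 + |c|) := by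
    rw [iSup_fin_two]
    rcases hroots with ⟨h0, h1⟩ | ⟨h0, h1⟩ <;> rw [h0, h1]
    · exact max_eq_left hle
    · exact max_eq_right hle
  have hmin : (⨅ i, e i) = s * (1 - |c|) := by
    rw [iInf_fin_two]
    rcases hroots with ⟨h0, h1⟩ | ⟨h0, h1⟩ <;> rw [h0, h1]
    · exact min_eq_right hle
    · exact min_eq_left hle
  -- the ratio
  have hR : Real.sqrt (⨆ i, e i) / Real.sqrt (⨅ i, e i)
      = Real.sqrt (1 + |c|) / Real.sqrt (1 - |c|) := by
    rw [hmax, hmin, Real.sqrt_mul hs.le, Real.sqrt_mul hs.le,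
      mul_div_mul_left _ _ (Real.sqrt_pos.mpr hs).ne']
  have hdivsqrt : ∀ a b : ℝ, 0 ≤ a → 0 < b →
      Real.sqrt (a / 2) / Real.sqrt (b / 2) = Real.sqrt a / Real.sqrt b := by
    intro a b ha hb
    rw [Real.sqrt_div ha, Real.sqrt_div hb.le]
    have h2 : Real.sqrt 2 ≠ 0 := by positivity
    have hbs : Real.sqrt b ≠ 0 := (Real.sqrt_pos.mpr hb).ne'
    field_simp
  refine ⟨?_, ?_, ?_⟩
  · intro hge
    have hc0 : c ≤ 0 := Real.cos_nonpos_of_pi_div_two_le_of_le hge (by linarith [Real.pi_pos])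
    rw [hR, abs_of_nonpos hc0]
    rw [Real.tan_eq_sin_div_cos, hsinh, hcosh, hdivsqrt _ _ (by linarith) h1pc]
    ring_nf
  · intro hlt
    have hc0 : (0:ℝ) ≤ c := Real.cos_nonneg_of_mem_Icc ⟨by linarith, hlt.le⟩
    rw [hR, abs_of_nonneg hc0]
    rw [Real.cot_eq_cos_div_sin, hsinh, hcosh, hdivsqrt _ _ (by linarith) h1mc]
  · rw [hR, hip]
    constructor
    · intro h
      have hden : Real.sqrt (1 - |c|) ≠ 0 := (Real.sqrt_pos.mpr habs1.2).ne'
      rw [div_eq_one_iff_eq hden] at h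
      have := (Real.sqrt_inj (by linarith [habs1.1]) (by linarith [habs1.2])).mp h
      have hc0 : c = 0 := by
        have : |c| = 0 := by linarith
        exact abs_eq_zero.mp this
      rw [hc0, mul_zero]
    · intro h
      have hc0 : c = 0 := by
        rcases mul_eq_zero.mp h with h' | h'
        · exact absurd h' hs.ne'
        · exact h'
      rw [hc0, abs_zero, add_zero, sub_zero]
      simp
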